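/- Validity of the convergence bound: let T_k, T̲_k, T̄_k be the aggregated, lower-envelope, and upper-envelope maps built from experts T̂_j : V → [0,1] with positive weights w_j, and suppose all maps take values in [0,1] and S(T̲_k) is nonempty. Then |C(T_k) − C(T_K)| ≤ C(T̲_k) − C(T̄_k) =: δ_k, where C(T) = min { f(τ; T) : τ ∈ S(T) } with f(τ; T) = Σ_{v ∈ τ}(1 − T(v))² + f'(τ) and S(T) = { τ ∈ P : ∀ v ∈ τ, T(v) ≥ θ }. -/
import Mathlib


/-- Cost of a path `τ` under traversability map `T` with auxiliary cost `f'`. -/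
def pathCost {V : Type*} (f' : List V → ℝ) (T : V → ℝ) (τ : List V) : ℝ :=
  (τ.map fun v => (1 - T v) ^ 2).sum + f' τ

/-- Feasible path set: paths in `P` all of whose vertices have traversability at least `θ`. -/
def feasSet {V : Type*} (P : Finset (List V)) (θ : ℝ) (T : V → ℝ) : Set (List V) :=
  {τ | τ ∈ P ∧ ∀ v ∈ τ, θ ≤ T v}

/-- Optimal path cost over the feasible set. -/
noncomputable def optCost {V : Type*} (P : Finset (List V)) (θ : ℝ)
    (f' : List V → ℝ) (T : V → ℝ) : ℝ :=
  sInf (pathCost f' T '' feasSet P θ T)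

lemma feasSet_mono {V : Type*} (P : Finset (List V)) (θ : ℝ) {A B : V → ℝ}
    (hAB : ∀ v, A v ≤ B v) : feasSet P θ A ⊆ feasSet P θ B :=
  fun τ hτ => ⟨hτ.1, fun v hv => (hτ.2 v hv).trans (hAB v)⟩

lemma optCost_mono {V : Type*} (P : Finset (List V)) (θ : ℝ) (f' : List V → ℝ)
    {A B : V → ℝ} (hAB : ∀ v, A v ≤ B v) (hA1 : ∀ v, A v ≤ 1) (hB1 : ∀ v, B v ≤ 1)
    (hne : (feasSet P θ A).Nonempty) :
    optCost P θ f' B ≤ optCost P θ f' A := by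
  have hfin : (pathCost f' B '' feasSet P θ B).Finite :=
    ((P.finite_toSet.subset (fun τ hτ => hτ.1)).image _)
  apply le_csInf (hne.image _)
  rintro x ⟨τ, hτ, rfl⟩
  refine csInf_le_of_le hfin.bddBelow ⟨τ, feasSet_mono P θ hAB hτ, rfl⟩ ?_
  unfold pathCost
  have hsum : ((τ.map fun v => (1 - B v) ^ 2).sum) ≤ ((τ.map fun v => (1 - A v) ^ 2).sum) := by
    refine List.sum_le_sum fun v _ => sq_le_sq' ?_ ?_
    · linarith [hA1 v, hB1 v]
    · linarith [hAB v]
  linarith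

/-- Validity of the convergence bound on the path cost under incremental updates. -/
theorem convergence_bound_valid
    {V : Type*} (P : Finset (List V)) (θ : ℝ) (f' : List V → ℝ)
    (K : ℕ) (That : ℕ → V → ℝ) (w : ℕ → ℝ)
    (hw : ∀ j, 1 ≤ j → j ≤ K → 0 < w j)
    (hT : ∀ j, 1 ≤ j → j ≤ K → ∀ v, 0 ≤ That j v ∧ That j v ≤ 1)
    (k : ℕ) (hk1 : 1 ≤ k) (hkK : k ≤ K)
    (hne : (feasSet P θ (fun v =>
      (∑ j ∈ Finset.Icc 1 k, w j * That j v) / (∑ j ∈ Finset.Icc 1 K, w j))).Nonempty) :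
    |optCost P θ f' (fun v =>
        (∑ j ∈ Finset.Icc 1 k, w j * That j v) / (∑ j ∈ Finset.Icc 1 k, w j))
      - optCost P θ f' (fun v =>
        (∑ j ∈ Finset.Icc 1 K, w j * That j v) / (∑ j ∈ Finset.Icc 1 K, w j))|
    ≤ optCost P θ f' (fun v =>
        (∑ j ∈ Finset.Icc 1 k, w j * That j v) / (∑ j ∈ Finset.Icc 1 K, w j))
      - optCost P θ f' (fun v =>
        (∑ j ∈ Finset.Icc 1 k, w j * That j v + ∑ j ∈ Finset.Icc (k+1) K, w j)
          / (∑ j ∈ Finset.Icc 1 K, w j)) := by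
  set sk : ℝ := ∑ j ∈ Finset.Icc 1 k, w j with hsk
  set SK : ℝ := ∑ j ∈ Finset.Icc 1 K, w j with hSK
  set R : ℝ := ∑ j ∈ Finset.Icc (k+1) K, w j with hR
  -- weight facts
  have hsplit : sk + R = SK := by
    rw [hsk, hSK, hR, show Finset.Icc 1 k = Finset.Ioc 0 k from (Finset.Icc_add_one_left_eq_Ioc 0 k),
      show Finset.Icc (k+1) K = Finset.Ioc k K from (Finset.Icc_add_one_left_eq_Ioc k K),
      show Finset.Icc 1 K = Finset.Ioc 0 K from (Finset.Icc_add_one_left_eq_Ioc 0 K)]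
    exact Finset.sum_Ioc_consecutive _ (Nat.zero_le k) hkK
  have hskpos : 0 < sk := by
    refine Finset.sum_pos (fun j hj => ?_) ⟨k, by simp [Finset.mem_Icc, hk1]⟩
    rw [Finset.mem_Icc] at hj
    exact hw j hj.1 (hj.2.trans hkK)
  have hRnn : 0 ≤ R := by
    refine Finset.sum_nonneg fun j hj => ?_
    rw [Finset.mem_Icc] at hj
    exact (hw j (le_trans hk1 (Nat.le_of_succ_le hj.1)) hj.2).le
  have hSKpos : 0 < SK := by linarith
  -- numerator facts
  have hSnn : ∀ v, 0 ≤ ∑ j ∈ Finset.Icc 1 k, w j * That j v := by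
    intro v
    refine Finset.sum_nonneg fun j hj => ?_
    rw [Finset.mem_Icc] at hj
    exact mul_nonneg (hw j hj.1 (hj.2.trans hkK)).le (hT j hj.1 (hj.2.trans hkK) v).1
  have hSle : ∀ v, (∑ j ∈ Finset.Icc 1 k, w j * That j v) ≤ sk := by
    intro v
    refine Finset.sum_le_sum fun j hj => ?_
    rw [Finset.mem_Icc] at hj
    nlinarith [(hw j hj.1 (hj.2.trans hkK)), (hT j hj.1 (hj.2.trans hkK) v).2]
  have hNsplit : ∀ v, (∑ j ∈ Finset.Icc 1 K, w j * That j v)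
      = (∑ j ∈ Finset.Icc 1 k, w j * That j v) + ∑ j ∈ Finset.Icc (k+1) K, w j * That j v := by
    intro v
    rw [show Finset.Icc 1 k = Finset.Ioc 0 k from (Finset.Icc_add_one_left_eq_Ioc 0 k),
      show Finset.Icc (k+1) K = Finset.Ioc k K from (Finset.Icc_add_one_left_eq_Ioc k K),
      show Finset.Icc 1 K = Finset.Ioc 0 K from (Finset.Icc_add_one_left_eq_Ioc 0 K)]
    exact (Finset.sum_Ioc_consecutive _ (Nat.zero_le k) hkK).symm
  have htailnn : ∀ v, 0 ≤ ∑ j ∈ Finset.Icc (k+1) K, w j * That j v := by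
    intro v
    refine Finset.sum_nonneg fun j hj => ?_
    rw [Finset.mem_Icc] at hj
    exact mul_nonneg (hw j (le_trans hk1 (Nat.le_of_succ_le hj.1)) hj.2).le
      (hT j (le_trans hk1 (Nat.le_of_succ_le hj.1)) hj.2 v).1
  have htaille : ∀ v, (∑ j ∈ Finset.Icc (k+1) K, w j * That j v) ≤ R := by
    intro v
    refine Finset.sum_le_sum fun j hj => ?_
    rw [Finset.mem_Icc] at hj
    have h1 := le_trans hk1 (Nat.le_of_succ_le hj.1)
    nlinarith [(hw j h1 hj.2), (hT j h1 hj.2 v).2]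
  -- the four maps
  set Tlow : V → ℝ := fun v => (∑ j ∈ Finset.Icc 1 k, w j * That j v) / SK with hTlow
  set Tk : V → ℝ := fun v => (∑ j ∈ Finset.Icc 1 k, w j * That j v) / sk with hTk
  set TK : V → ℝ := fun v => (∑ j ∈ Finset.Icc 1 K, w j * That j v) / SK with hTKdef
  set Thigh : V → ℝ := fun v => ((∑ j ∈ Finset.Icc 1 k, w j * That j v) + R) / SK with hThigh
  -- pointwise inequalities
  have h_low_k : ∀ v, Tlow v ≤ Tk v := by
    intro v
    rw [hTlow, hTk, div_le_div_iff₀ hSKpos hskpos]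
    nlinarith [hSnn v]
  have h_low_K : ∀ v, Tlow v ≤ TK v := by
    intro v
    simp only [hTlow, hTKdef]
    apply div_le_div_of_nonneg_right ?_ hSKpos.le
    rw [hNsplit v]; linarith [htailnn v]
  have h_k_high : ∀ v, Tk v ≤ Thigh v := by
    intro v
    rw [hTk, hThigh, div_le_div_iff₀ hskpos hSKpos]
    nlinarith [hSle v]
  have h_K_high : ∀ v, TK v ≤ Thigh v := by
    intro v
    simp only [hTKdef, hThigh]
    apply div_le_div_of_nonneg_right ?_ hSKpos.le
    rw [hNsplit v]; linarith [htaille v]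
  have h_k1 : ∀ v, Tk v ≤ 1 := fun v => by
    rw [hTk, div_le_one hskpos]; exact hSle v
  have h_K1 : ∀ v, TK v ≤ 1 := fun v => by
    rw [hTKdef, div_le_one hSKpos, hNsplit v]
    linarith [hSle v, htaille v]
  have h_high1 : ∀ v, Thigh v ≤ 1 := fun v => by
    rw [hThigh, div_le_one hSKpos]
    linarith [hSle v]
  have h_low1 : ∀ v, Tlow v ≤ 1 := fun v => (h_low_k v).trans (h_k1 v)
  -- nonemptiness
  have hne_low : (feasSet P θ Tlow).Nonempty := hne
  have hne_k : (feasSet P θ Tk).Nonempty := hne_low.mono (feasSet_mono P θ h_low_k)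
  have hne_K : (feasSet P θ TK).Nonempty := hne_low.mono (feasSet_mono P θ h_low_K)
  -- opt cost comparisons
  have c1 : optCost P θ f' Tk ≤ optCost P θ f' Tlow :=
    optCost_mono P θ f' h_low_k h_low1 h_k1 hne_low
  have c2 : optCost P θ f' TK ≤ optCost P θ f' Tlow :=
    optCost_mono P θ f' h_low_K h_low1 h_K1 hne_low
  have c3 : optCost P θ f' Thigh ≤ optCost P θ f' Tk :=
    optCost_mono P θ f' h_k_high h_k1 h_high1 hne_k
  have c4 : optCost P θ f' Thigh ≤ optCost P θ f' TK :=
    optCost_mono P θ f' h_K_high h_K1 h_high1 hne_K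
  have : |optCost P θ f' Tk - optCost P θ f' TK|
      ≤ optCost P θ f' Tlow - optCost P θ f' Thigh := by
    rw [abs_sub_le_iff]
    constructor <;> linarith
  simpa [hTk, hTKdef, hTlow, hThigh, hSK, hsk, hR] using this
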